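/- Let C be a finite nonempty set of positive integers and let c be maximal for C, i.e., 1 ∉ C ∸ c and for every d > 1 dividing lcm(C ∸ c) we have 1 ∈ C ∸ (c·d), where C ∸ c := {a ∸ c | a ∈ C} and a ∸ c := a / gcd(a,c). Then every element of C ∸ c is divisible by some prime belonging to C ∸ c. -/

import Mathlib

/-- For positive integers `a`, `c` define `a ∸ c := a / gcd(a, c)`. -/
def dd (a c : ℕ) : ℕ := a / Nat.gcd a c

/-- `C ∸ c := {a ∸ c | a ∈ C}`. -/
def ddSet (C : Finset ℕ) (c : ℕ) : Finset ℕ := C.image (fun a => dd a c)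

/-- `c` is maximal for `C` if `1 ∉ C ∸ c` and `1 ∈ C ∸ (c·d)` for every
`d > 1` dividing `lcm (C ∸ c)`. -/
def MaximalForDd (C : Finset ℕ) (c : ℕ) : Prop :=
  1 ∉ ddSet C c ∧ ∀ d : ℕ, 1 < d → d ∣ (ddSet C c).lcm id → 1 ∈ ddSet C (c * d)

theorem stmt_6 (C : Finset ℕ) (hC : C.Nonempty) (hpos : ∀ a ∈ C, 0 < a)
    (c : ℕ) (hc : 0 < c) (hmax : MaximalForDd C c) :
    ∀ x ∈ ddSet C c, ∃ p, p.Prime ∧ p ∈ ddSet C c ∧ p ∣ x := by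
  obtain ⟨hnot1, hmax2⟩ := hmax
  intro x hx
  obtain ⟨a, ha, rfl⟩ := Finset.mem_image.mp hx
  have hax : 0 < a := hpos a ha
  have hgpos : 0 < Nat.gcd a c := Nat.gcd_pos_of_pos_left c hax
  have hxpos : 0 < dd a c := Nat.div_pos (Nat.le_of_dvd hax (Nat.gcd_dvd_left a c)) hgpos
  have hx1 : dd a c ≠ 1 := fun h => hnot1 (h ▸ hx)
  obtain ⟨p, hp, hpd⟩ := Nat.exists_prime_and_dvd hx1
  refine ⟨p, hp, ?_, hpd⟩
  have hlcm : p ∣ (ddSet C c).lcm id := hpd.trans (Finset.dvd_lcm hx)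
  obtain ⟨b, hb, hb1⟩ := Finset.mem_image.mp (hmax2 p hp.one_lt hlcm)
  have hbpos : 0 < b := hpos b hb
  -- from dd b (c*p) = 1, deduce b ∣ c * p
  have hbg : b = Nat.gcd b (c * p) := by
    have := Nat.div_mul_cancel (Nat.gcd_dvd_left b (c * p))
    rw [show b / Nat.gcd b (c * p) = 1 from hb1, one_mul] at this
    omega
  have hbdvd : b ∣ c * p := hbg ▸ Nat.gcd_dvd_right b (c * p)
  -- now show dd b c = p
  set g := Nat.gcd b c with hg
  have hgpos' : 0 < g := Nat.gcd_pos_of_pos_left c hbpos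
  have h1 : g * (b / g) ∣ g * (c / g * p) := by
    rw [Nat.mul_div_cancel' (Nat.gcd_dvd_left b c), ← mul_assoc,
      Nat.mul_div_cancel' (Nat.gcd_dvd_right b c)]
    exact hbdvd
  have h2 : b / g ∣ c / g * p := (mul_dvd_mul_iff_left hgpos'.ne').mp h1
  have hcop : Nat.Coprime (b / g) (c / g) := Nat.coprime_div_gcd_div_gcd hgpos'
  have h3 : b / g ∣ p := by
    have := hcop.dvd_of_dvd_mul_left (by rwa [mul_comm] at h2)
    exact this
  have hbne1 : b / g ≠ 1 := by
    intro h
    exact hnot1 (Finset.mem_image.mpr ⟨b, hb, show dd b c = 1 from h⟩)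
  have : b / g = p := ((Nat.dvd_prime hp).mp h3).resolve_left hbne1
  exact Finset.mem_image.mpr ⟨b, hb, show dd b c = p from this⟩
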